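/- Suppose for a random tree with height H and vertex count V the bound P(V ≤ n, H ≥ k) ≤ exp(−k·n^{−1/D + o(1)}) holds as n → ∞ (uniformly, i.e., for every δ>0, for large n, P(V ≤ n, H ≥ k) ≤ exp(−k·n^{−1/D−δ}) for all k). Then for every ε > 0 there exists η > 0 such that P(H > V^{1/D + ε}, V ≥ n) ≤ exp(−n^η) for all sufficiently large n. -/

import Mathlib

open MeasureTheory Filter

open Asymptotics

lemma aux_summable {α : ℝ} (hα : 0 < α) :
    Summable fun m : ℕ => Real.exp (-(1/2 * (m:ℝ) ^ α)) := by
  have h2 : Summable fun m : ℕ => (1:ℝ)/(m:ℝ)^2 := by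
    simpa using Real.summable_one_div_nat_pow.mpr (by norm_num : 1 < 2)
  refine summable_of_isBigO_nat h2 (IsBigO.of_bound 1 ?_)
  have hlog := (isLittleO_log_rpow_atTop hα).def (by norm_num : (0:ℝ) < 1/4)
  have := (tendsto_natCast_atTop_atTop (R := ℝ)).eventually hlog
  filter_upwards [this, eventually_ge_atTop 1] with m hm hm1
  have hm0 : (1:ℝ) ≤ (m:ℝ) := by exact_mod_cast hm1
  have hmp : (0:ℝ) < m := by linarith
  have hlogm : Real.log m ≤ 1/4 * (m:ℝ)^α := by
    calc Real.log m ≤ ‖Real.log m‖ := by rw [Real.norm_eq_abs]; exact le_abs_self _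
    _ ≤ 1/4 * ‖(m:ℝ)^α‖ := hm
    _ = 1/4 * (m:ℝ)^α := by rw [Real.norm_eq_abs, abs_of_nonneg (Real.rpow_nonneg hmp.le _)]
  have hsq : ((m:ℝ))^2 ≤ Real.exp (1/2 * (m:ℝ)^α) := by
    have h2l : (2:ℝ) * Real.log m = Real.log ((m:ℝ)^2) := by
      rw [Real.log_pow]; norm_num
    rw [show ((m:ℝ))^2 = Real.exp (2 * Real.log m) by rw [h2l, Real.exp_log (by positivity)]]
    exact Real.exp_le_exp.mpr (by linarith)
  have hfin : Real.exp (-(1/2 * (m:ℝ)^α)) ≤ 1/(m:ℝ)^2 := by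
    simpa [Real.exp_neg, one_div] using
      inv_anti₀ (show (0:ℝ) < (m:ℝ)^2 by positivity) hsq
  calc ‖Real.exp (-(1/2 * (m:ℝ)^α))‖ = Real.exp (-(1/2 * (m:ℝ)^α)) := by
        rw [Real.norm_eq_abs, abs_of_nonneg (Real.exp_nonneg _)]
    _ ≤ 1/(m:ℝ)^2 := hfin
    _ ≤ 1 * ‖(1:ℝ)/(m:ℝ)^2‖ := by rw [one_mul, Real.norm_eq_abs, abs_of_nonneg (by positivity)]

lemma aux_tendsto {α : ℝ} (hα : 0 < α) :
    Tendsto (fun x : ℝ => x^α/2 - x^(α/4)) atTop atTop := by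
  have h1 : Tendsto (fun x : ℝ => x^(α/4) * (x^(3*α/4)/2 - 1)) atTop atTop := by
    apply Tendsto.atTop_mul_atTop₀ (tendsto_rpow_atTop (by linarith))
    apply tendsto_atTop_add_const_right
    exact (tendsto_rpow_atTop (by linarith)).atTop_div_const (by norm_num)
  apply h1.congr'
  filter_upwards [eventually_gt_atTop (0:ℝ)] with x hx
  have he : α/4 + 3*α/4 = α := by ring
  rw [mul_sub, mul_one, ← mul_div_assoc, ← Real.rpow_add hx, he]



/- STATEMENT 15: If for every `δ > 0`, for all large `n`,
`P(V ≤ n, H ≥ k) ≤ exp(−k·n^{−1/D−δ})` for all `k`, then for every `ε > 0` there is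
`η > 0` such that `P(H > V^{1/D+ε}, V ≥ n) ≤ exp(−n^η)` for all sufficiently large `n`. -/
theorem stmt_15 {Ω : Type*} [MeasurableSpace Ω] (μ : Measure Ω) [IsProbabilityMeasure μ]
    (V H : Ω → ℕ) (hV : Measurable V) (hH : Measurable H)
    (D : ℝ) (hD : 1 < D)
    (hbound : ∀ δ > (0 : ℝ), ∃ N : ℕ, ∀ n ≥ N, ∀ k : ℕ,
      (μ {ω | V ω ≤ n ∧ k ≤ H ω}).toReal ≤
        Real.exp (-(k : ℝ) * (n : ℝ) ^ (-(1 / D) - δ))) :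
    ∀ ε > (0 : ℝ), ∃ η > (0 : ℝ), ∃ N : ℕ, ∀ n ≥ N,
      (μ {ω | (V ω : ℝ) ^ (1 / D + ε) < (H ω : ℝ) ∧ n ≤ V ω}).toReal ≤
        Real.exp (-(n : ℝ) ^ η) := by
  intro ε hε
  have hα0 : (0:ℝ) < ε/2 := by linarith
  set α : ℝ := ε/2 with hαdef
  obtain ⟨N₀, hN₀⟩ := hbound (ε/2) (by linarith)
  have hS := aux_summable hα0
  set S : ℝ := ∑' m : ℕ, Real.exp (-(1/2 * (m:ℝ)^α)) with hSdef
  have htend : Tendsto (fun n : ℕ => Real.exp ((n:ℝ)^α/2 - (n:ℝ)^(α/4))) atTop atTop :=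
    (Real.tendsto_exp_atTop.comp (aux_tendsto hα0)).comp tendsto_natCast_atTop_atTop
  obtain ⟨N₁, hN₁⟩ := Filter.eventually_atTop.mp (htend.eventually_ge_atTop S)
  refine ⟨α/4, by positivity, max (max N₀ N₁) 1, ?_⟩
  intro n hn
  have hnN₀ : N₀ ≤ n := le_trans (le_trans (le_max_left _ _) (le_max_left _ _)) hn
  have hnN₁ : N₁ ≤ n := le_trans (le_trans (le_max_right _ _) (le_max_left _ _)) hn
  have hn1 : 1 ≤ n := le_trans (le_max_right _ _) hn
  have hn0 : (0:ℝ) < n := by exact_mod_cast hn1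
  set E := {ω | (V ω : ℝ) ^ (1 / D + ε) < (H ω : ℝ) ∧ n ≤ V ω} with hEdef
  set f : ℕ → ℝ := fun m => if m < n then 0 else Real.exp (-(m:ℝ)^α) with hfdef
  have hf0 : ∀ m, 0 ≤ f m := by
    intro m; simp only [hfdef]; split
    · exact le_rfl
    · exact Real.exp_nonneg _
  -- per-term bound
  have hterm : ∀ m : ℕ, μ (E ∩ V ⁻¹' {m}) ≤ ENNReal.ofReal (f m) := by
    intro m
    by_cases hmn : m < n
    · have hE : E ∩ V ⁻¹' {m} = ∅ := by
        ext ω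
        simp only [hEdef, Set.mem_inter_iff, Set.mem_setOf_eq, Set.mem_preimage,
          Set.mem_singleton_iff, Set.mem_empty_iff_false, iff_false, not_and]
        rintro ⟨h1, h2⟩ h3
        omega
      simp [hE, hfdef, hmn]
    · push_neg at hmn
      have hm0 : (0:ℝ) < m := lt_of_lt_of_le hn0 (by exact_mod_cast hmn)
      set k : ℕ := ⌈(m:ℝ)^(1/D+ε)⌉₊ with hkdef
      have hsub2 : E ∩ V ⁻¹' {m} ⊆ {ω | V ω ≤ m ∧ k ≤ H ω} := by
        rintro ω ⟨hωE, hωm⟩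
        simp only [Set.mem_preimage, Set.mem_singleton_iff] at hωm
        obtain ⟨h1, h2⟩ := hωE
        refine ⟨le_of_eq hωm, Nat.ceil_le.mpr ?_⟩
        rw [← hωm]
        exact le_of_lt h1
      have hB1 : (μ {ω | V ω ≤ m ∧ k ≤ H ω}).toReal ≤
          Real.exp (-(k : ℝ) * (m : ℝ) ^ (-(1 / D) - ε/2)) :=
        hN₀ m (le_trans hnN₀ hmn) k
      have hexp2 : Real.exp (-(k : ℝ) * (m : ℝ) ^ (-(1 / D) - ε/2)) ≤
          Real.exp (-(m:ℝ)^α) := by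
        apply Real.exp_le_exp.mpr
        have hk : (m:ℝ)^(1/D+ε) ≤ (k:ℝ) := Nat.le_ceil _
        have hx : (0:ℝ) < (m:ℝ)^(-(1/D) - ε/2) := Real.rpow_pos_of_pos hm0 _
        have hkey : (m:ℝ)^α ≤ (k:ℝ) * (m:ℝ)^(-(1/D) - ε/2) := by
          calc (m:ℝ)^α = (m:ℝ)^(1/D+ε) * (m:ℝ)^(-(1/D) - ε/2) := by
                rw [← Real.rpow_add hm0]
                congr 1
                rw [hαdef]; ring
            _ ≤ (k:ℝ) * (m:ℝ)^(-(1/D) - ε/2) := by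
                exact mul_le_mul_of_nonneg_right hk hx.le
        rw [neg_mul]
        exact neg_le_neg hkey
      calc μ (E ∩ V ⁻¹' {m}) ≤ μ {ω | V ω ≤ m ∧ k ≤ H ω} := measure_mono hsub2
        _ = ENNReal.ofReal ((μ {ω | V ω ≤ m ∧ k ≤ H ω}).toReal) :=
            (ENNReal.ofReal_toReal (measure_ne_top μ _)).symm
        _ ≤ ENNReal.ofReal (Real.exp (-(m:ℝ)^α)) :=
            ENNReal.ofReal_le_ofReal (le_trans hB1 hexp2)
        _ = ENNReal.ofReal (f m) := by rw [hfdef]; simp [not_lt.mpr hmn]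
  -- summability and tail bound of f
  have hle : ∀ m, f m ≤ Real.exp (-((n:ℝ)^α/2)) * Real.exp (-(1/2 * (m:ℝ)^α)) := by
    intro m
    simp only [hfdef]
    split
    · positivity
    · rename_i hmn
      push_neg at hmn
      rw [← Real.exp_add]
      apply Real.exp_le_exp.mpr
      have hna : (n:ℝ)^α ≤ (m:ℝ)^α :=
        Real.rpow_le_rpow (by positivity) (by exact_mod_cast hmn) hα0.le
      linarith
  have hg : Summable (fun m : ℕ => Real.exp (-((n:ℝ)^α/2)) * Real.exp (-(1/2 * (m:ℝ)^α))) :=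
    hS.mul_left _
  have hfsum : Summable f := Summable.of_nonneg_of_le hf0 hle hg
  have htsum : (∑' m, f m) ≤ Real.exp (-(n:ℝ)^(α/4)) := by
    calc (∑' m, f m) ≤ ∑' m : ℕ, Real.exp (-((n:ℝ)^α/2)) * Real.exp (-(1/2 * (m:ℝ)^α)) :=
          Summable.tsum_le_tsum hle hfsum hg
      _ = Real.exp (-((n:ℝ)^α/2)) * S := by rw [tsum_mul_left]
      _ ≤ Real.exp (-((n:ℝ)^α/2)) * Real.exp ((n:ℝ)^α/2 - (n:ℝ)^(α/4)) :=
          mul_le_mul_of_nonneg_left (hN₁ n hnN₁) (Real.exp_nonneg _)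
      _ = Real.exp (-(n:ℝ)^(α/4)) := by rw [← Real.exp_add]; congr 1; ring
  -- assemble
  have hμ : μ E ≤ ENNReal.ofReal (Real.exp (-(n:ℝ)^(α/4))) := by
    calc μ E ≤ μ (⋃ m : ℕ, E ∩ V ⁻¹' {m}) :=
          measure_mono (fun ω hω => Set.mem_iUnion.mpr ⟨V ω, hω, rfl⟩)
      _ ≤ ∑' m, μ (E ∩ V ⁻¹' {m}) := measure_iUnion_le _
      _ ≤ ∑' m, ENNReal.ofReal (f m) := ENNReal.tsum_le_tsum hterm
      _ = ENNReal.ofReal (∑' m, f m) := (ENNReal.ofReal_tsum_of_nonneg hf0 hfsum).symm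
      _ ≤ ENNReal.ofReal (Real.exp (-(n:ℝ)^(α/4))) := ENNReal.ofReal_le_ofReal htsum
  calc (μ E).toReal ≤ (ENNReal.ofReal (Real.exp (-(n:ℝ)^(α/4)))).toReal :=
        ENNReal.toReal_mono ENNReal.ofReal_ne_top hμ
    _ = Real.exp (-(n:ℝ)^(α/4)) := ENNReal.toReal_ofReal (Real.exp_nonneg _)
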